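/- The total number of edges of the 132-core D_n equals binomial(n+1, 4). -/
import Mathlib


/-- Vertices of the cores: pairs (i,j) with 1 ≤ i ≤ j ≤ n. -/
def DVert (n : ℕ) (p : ℕ × ℕ) : Prop := 1 ≤ p.1 ∧ p.1 ≤ p.2 ∧ p.2 ≤ n

/-- One-directional (southeast) adjacency of the 132-core. -/
def DOne (n : ℕ) (p q : ℕ × ℕ) : Prop :=
  p.1 < q.1 ∧ q.1 ≤ p.2 ∧ p.2 < q.2 ∧ q.2 ≤ n

/-- Adjacency of the 132-core `D_n`. -/
def DAdj (n : ℕ) (p q : ℕ × ℕ) : Prop := DOne n p q ∨ DOne n q p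

/-- One-directional adjacency of the 123-core. -/
def UOne (n : ℕ) (p q : ℕ × ℕ) : Prop :=
  p.1 < q.1 ∧ p.2 < q.2 ∧ q.1 ≤ n ∧ q.2 ≤ n

/-- Adjacency of the 123-core `U_n`. -/
def UAdj (n : ℕ) (p q : ℕ × ℕ) : Prop := UOne n p q ∨ UOne n q p

open Finset

private def Fset (n : ℕ) : Finset ((ℕ × ℕ) × (ℕ × ℕ)) :=
  ((Icc 1 n ×ˢ Icc 1 n) ×ˢ (Icc 1 n ×ˢ Icc 1 n)).filter
    (fun pq => pq.1.1 < pq.2.1 ∧ pq.2.1 ≤ pq.1.2 ∧ pq.1.2 < pq.2.2)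

lemma mem_Fset (n : ℕ) (pq : (ℕ × ℕ) × (ℕ × ℕ)) :
    pq ∈ Fset n ↔ DVert n pq.1 ∧ DVert n pq.2 ∧ DOne n pq.1 pq.2 := by
  simp only [Fset, mem_filter, mem_product, mem_Icc, DVert, DOne]
  omega

lemma helperA (n : ℕ) : ∀ j ≤ n, ∑ i ∈ Icc 1 n, (j - i) = j.choose 2 := by
  induction n with
  | zero => intro j hj; interval_cases j; simp
  | succ n ih =>
    intro j hj
    rw [Finset.sum_Icc_succ_top (by omega)]
    rcases Nat.lt_or_ge j (n + 1) with h | h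
    · rw [ih j (by omega)]; omega
    · have hj' : j = n + 1 := by omega
      subst hj'
      have : ∑ i ∈ Icc 1 n, (n + 1 - i) = ∑ i ∈ Icc 1 n, ((n - i) + 1) := by
        apply Finset.sum_congr rfl
        intro i hi; simp only [mem_Icc] at hi; omega
      rw [this, Finset.sum_add_distrib, ih n le_rfl, Finset.sum_const, Nat.card_Icc]
      have hc : (n + 1).choose 2 = n.choose 1 + n.choose 2 := rfl
      rw [hc, Nat.choose_one_right]
      simp only [smul_eq_mul, mul_one]
      omega

lemma hockey (n : ℕ) : ∑ j ∈ Icc 1 n, j.choose 2 = (n + 1).choose 3 := by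
  have h := Nat.sum_Icc_choose n 2
  rw [← h]
  apply (Finset.sum_subset (Finset.Icc_subset_Icc_left (by norm_num)) _).symm
  intro x hx hx'
  simp only [mem_Icc] at hx hx'
  have : x = 1 := by omega
  simp [this]

lemma helperB (n : ℕ) : ∑ j ∈ Icc 1 n, j.choose 2 * (n - j) = (n + 1).choose 4 := by
  induction n with
  | zero => decide
  | succ n ih =>
    rw [Finset.sum_Icc_succ_top (by omega), Nat.sub_self, Nat.mul_zero, Nat.add_zero]
    have : ∑ j ∈ Icc 1 n, j.choose 2 * (n + 1 - j)
        = ∑ j ∈ Icc 1 n, (j.choose 2 * (n - j) + j.choose 2) := by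
      apply Finset.sum_congr rfl
      intro j hj; simp only [mem_Icc] at hj
      have : n + 1 - j = (n - j) + 1 := by omega
      rw [this, Nat.mul_add, Nat.mul_one]
    rw [this, Finset.sum_add_distrib, ih, hockey]
    rw [Nat.choose_succ_succ (n + 1) 3]
    simp only [Nat.succ_eq_add_one]
    norm_num
    omega

lemma card_Fset (n : ℕ) : (Fset n).card = (n + 1).choose 4 := by
  rw [Fset, Finset.card_filter, Finset.sum_product]
  have step1 : ∀ p ∈ Icc 1 n ×ˢ Icc 1 n,
      (∑ q ∈ Icc 1 n ×ˢ Icc 1 n,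
        if p.1 < q.1 ∧ q.1 ≤ p.2 ∧ p.2 < q.2 then 1 else 0)
      = (p.2 - p.1) * (n - p.2) := by
    rintro ⟨i, j⟩ hp
    simp only [mem_product, mem_Icc] at hp
    rw [Finset.sum_product]
    have inner : ∀ k, (∑ l ∈ Icc 1 n, if i < k ∧ k ≤ j ∧ j < l then 1 else 0)
        = if i < k ∧ k ≤ j then (n - j) else 0 := by
      intro k
      by_cases hk : i < k ∧ k ≤ j
      · simp only [hk, true_and, if_true]
        rw [← Finset.card_filter]
        have : (Icc 1 n).filter (fun l => j < l) = Ioc j n := by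
          ext l; simp only [mem_filter, mem_Icc, mem_Ioc]; omega
        rw [this, Nat.card_Ioc]
      · have : ∀ l, ¬ (i < k ∧ k ≤ j ∧ j < l) := by
          intro l h; exact hk ⟨h.1, h.2.1⟩
        simp [this, hk]
    rw [Finset.sum_congr rfl (fun k _ => inner k)]
    rw [← Finset.sum_filter]
    have : (Icc 1 n).filter (fun k => i < k ∧ k ≤ j) = Ioc i j := by
      ext k; simp only [mem_filter, mem_Icc, mem_Ioc]; omega
    rw [this, Finset.sum_const, Nat.card_Ioc, smul_eq_mul]
  rw [Finset.sum_congr rfl step1, Finset.sum_product]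
  rw [Finset.sum_comm]
  have : ∀ j ∈ Icc 1 n, (∑ i ∈ Icc 1 n, (j - i) * (n - j)) = j.choose 2 * (n - j) := by
    intro j hj
    simp only [mem_Icc] at hj
    rw [← Finset.sum_mul, helperA n j hj.2]
  rw [Finset.sum_congr rfl this, helperB]


/-- The total number of edges of the 132-core `D_n` equals `binomial(n+1,4)`.
Each edge is counted once, oriented from northwest to southeast. -/
theorem dcore_edge_count (n : ℕ) :
    Nat.card {pq : (ℕ × ℕ) × (ℕ × ℕ) //
        DVert n pq.1 ∧ DVert n pq.2 ∧ DOne n pq.1 pq.2} =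
      (n + 1).choose 4 := by
  rw [← card_Fset n, ← Nat.card_eq_finsetCard (Fset n)]
  exact Nat.card_congr (Equiv.subtypeEquivRight (fun pq => (mem_Fset n pq).symm))
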